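/- $\sum_{k=1}^{\infty} \frac{h_k}{(2k-1)(2k+1)} = \frac{3}{8}\zeta(2) = \frac{\pi^2}{16}$. -/

import Mathlib

open Real

noncomputable def H (n k : ℕ) : ℝ := ∑ i ∈ Finset.Icc 1 k, 1 / (i : ℝ) ^ n

noncomputable def h (n k : ℕ) : ℝ := ∑ i ∈ Finset.Icc 1 k, 1 / (2 * (i : ℝ) - 1) ^ n

noncomputable def zeta (s : ℕ) : ℝ := ∑' n : ℕ, 1 / ((n : ℝ) + 1) ^ s

lemma h_succ (n : ℕ) : h 1 (n + 2) = h 1 (n + 1) + 1 / (2 * (n : ℝ) + 3) := by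
  rw [h, h, Finset.sum_Icc_succ_top (by omega)]
  push_cast
  norm_num
  ring

lemma h_nonneg (k : ℕ) : 0 ≤ h 1 k := by
  apply Finset.sum_nonneg
  intro i hi
  simp only [Finset.mem_Icc] at hi
  have : (1 : ℝ) ≤ i := by exact_mod_cast hi.1
  have : (0 : ℝ) < 2 * i - 1 := by linarith
  positivity

lemma aux (a x A : ℝ) (ha : a ≠ 0) (hb : a + 2 ≠ 0) :
    1 / 2 * (1 - x / a + A) + x / (a * (a + 2)) =
      1 / 2 * (1 - (x + 1 / (a + 2)) / (a + 2) + (A + 1 / (a + 2) ^ 2)) := by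
  field_simp
  ring

lemma key (n : ℕ) :
    ∑ k ∈ Finset.range n, h 1 (k + 1) / ((2 * ((k : ℝ) + 1) - 1) * (2 * ((k : ℝ) + 1) + 1)) =
      1 / 2 * (1 - h 1 (n + 1) / (2 * (n : ℝ) + 1)
        + ∑ k ∈ Finset.range n, 1 / (2 * ((k : ℝ) + 1) + 1) ^ 2) := by
  induction n with
  | zero => norm_num [h]
  | succ n ih =>
    rw [Finset.sum_range_succ, Finset.sum_range_succ, ih, show n + 1 + 1 = n + 2 from rfl,
      h_succ]
    have h1 : (2 * (n : ℝ) + 1) ≠ 0 := by positivity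
    have h3 : (2 * (n : ℝ) + 3) ≠ 0 := by positivity
    push_cast
    set x := h 1 (n + 1) with hx
    set A := ∑ k ∈ Finset.range n, 1 / (2 * ((k : ℝ) + 1) + 1) ^ 2 with hA
    rw [show (2 * ((n : ℝ) + 1) - 1) = 2 * (n : ℝ) + 1 by ring,
      show (2 * ((n : ℝ) + 1) + 1) = 2 * (n : ℝ) + 1 + 2 by ring,
      show (2 * (n : ℝ) + 3) = 2 * (n : ℝ) + 1 + 2 by ring]
    exact aux _ _ _ h1 (by positivity)

open Filter Topology Asymptotics

lemma hasSum_odd_sq : HasSum (fun k : ℕ => 1 / (2 * (k : ℝ) + 1) ^ 2) (π ^ 2 / 8) := by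
  have hf := hasSum_zeta_two
  have heven : HasSum (fun k : ℕ => (1 : ℝ) / ((2 * k : ℕ) : ℝ) ^ 2) (π ^ 2 / 24) := by
    have h4 := hf.div_const 4
    have e : (fun k : ℕ => (1 : ℝ) / ((2 * k : ℕ) : ℝ) ^ 2) = fun n : ℕ => 1 / (n : ℝ) ^ 2 / 4 := by
      funext n; push_cast; ring
    rw [e, show π ^ 2 / 24 = π ^ 2 / 6 / 4 by ring]
    exact h4
  have hinj : Function.Injective (fun k : ℕ => 2 * k + 1) := fun a b hab => by
    simpa using hab
  have hodd : Summable (fun k : ℕ => (1 : ℝ) / ((2 * k + 1 : ℕ) : ℝ) ^ 2) :=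
    hf.summable.comp_injective hinj
  obtain ⟨b, hb⟩ := hodd
  have hsum2 : HasSum (fun n : ℕ => (1 : ℝ) / (n : ℝ) ^ 2) (π ^ 2 / 24 + b) :=
    HasSum.even_add_odd (f := fun n : ℕ => (1 : ℝ) / (n : ℝ) ^ 2) heven hb
  have huniq : π ^ 2 / 24 + b = π ^ 2 / 6 := hsum2.unique hf
  have hb8 : b = π ^ 2 / 8 := by linarith
  rw [hb8] at hb
  have e2 : (fun k : ℕ => (1 : ℝ) / ((2 * k + 1 : ℕ) : ℝ) ^ 2)
      = fun k : ℕ => 1 / (2 * (k : ℝ) + 1) ^ 2 := by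
    funext k; push_cast; ring
  rwa [e2] at hb

lemma hasSum_odd_sq_shift :
    HasSum (fun k : ℕ => 1 / (2 * ((k : ℝ) + 1) + 1) ^ 2) (π ^ 2 / 8 - 1) := by
  have e : (fun k : ℕ => 1 / (2 * ((k : ℝ) + 1) + 1) ^ 2)
      = fun k : ℕ => (fun m : ℕ => 1 / (2 * (m : ℝ) + 1) ^ 2) (k + 1) := by
    funext k; push_cast; ring_nf
  rw [e]
  refine (hasSum_nat_add_iff (f := fun m : ℕ => 1 / (2 * (m : ℝ) + 1) ^ 2) 1).mpr ?_
  convert hasSum_odd_sq using 1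
  · rfl
  · norm_num

lemma h_le_harmonic (k : ℕ) : h 1 k ≤ (harmonic k : ℝ) := by
  rw [h, harmonic_eq_sum_Icc]
  push_cast
  apply Finset.sum_le_sum
  intro i hi
  simp only [Finset.mem_Icc] at hi
  have h1 : (1 : ℝ) ≤ (i : ℝ) := by exact_mod_cast hi.1
  rw [pow_one, one_div]
  apply inv_anti₀
  · linarith
  · linarith

lemma tend0 : Tendsto (fun n : ℕ => h 1 (n + 1) / (2 * (n : ℝ) + 1)) atTop (𝓝 0) := by
  have l1 : Tendsto (fun x : ℝ => 1 / x) atTop (𝓝 0) := by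
    simpa [one_div] using tendsto_inv_atTop_zero (𝕜 := ℝ)
  have l2 : Tendsto (fun x : ℝ => Real.log x / x) atTop (𝓝 0) :=
    Real.isLittleO_log_id_atTop.tendsto_div_nhds_zero
  have l3 : Tendsto (fun x : ℝ => (1 + Real.log x) / x) atTop (𝓝 0) := by
    have := l1.add l2
    rw [add_zero] at this
    exact this.congr fun x => by rw [add_div]
  have l4 : Tendsto (fun n : ℕ => (1 + Real.log ((n : ℝ) + 1)) / ((n : ℝ) + 1)) atTop (𝓝 0) :=
    l3.comp (tendsto_atTop_add_const_right atTop 1 tendsto_natCast_atTop_atTop)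
  apply squeeze_zero (fun n => ?_) (fun n => ?_) l4
  · have := h_nonneg (n + 1)
    positivity
  · have hh : h 1 (n + 1) ≤ 1 + Real.log ((n : ℝ) + 1) := by
      refine (h_le_harmonic (n + 1)).trans ?_
      have := harmonic_le_one_add_log (n + 1)
      push_cast at this ⊢
      linarith
    have hlog : (0 : ℝ) ≤ Real.log ((n : ℝ) + 1) := Real.log_nonneg (by norm_num)
    apply div_le_div₀ (by linarith) hh (by positivity) (by linarith)


theorem stmt8 :
    (∑' k : ℕ, h 1 (k + 1) / ((2 * ((k : ℝ) + 1) - 1) * (2 * ((k : ℝ) + 1) + 1)) = 3 / 8 * (π ^ 2 / 6)) ∧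
    (∑' k : ℕ, h 1 (k + 1) / ((2 * ((k : ℝ) + 1) - 1) * (2 * ((k : ℝ) + 1) + 1)) = π ^ 2 / 16) := by
  have hnonneg : ∀ k : ℕ, 0 ≤ h 1 (k + 1) / ((2 * ((k : ℝ) + 1) - 1) * (2 * ((k : ℝ) + 1) + 1)) := by
    intro k
    have h1 := h_nonneg (k + 1)
    have h2 : (0 : ℝ) < (2 * ((k : ℝ) + 1) - 1) * (2 * ((k : ℝ) + 1) + 1) := by
      have : (0 : ℝ) ≤ k := Nat.cast_nonneg k
      nlinarith
    positivity
  have hT := hasSum_odd_sq_shift.tendsto_sum_nat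
  have htend : Tendsto (fun n : ℕ => ∑ k ∈ Finset.range n,
      h 1 (k + 1) / ((2 * ((k : ℝ) + 1) - 1) * (2 * ((k : ℝ) + 1) + 1))) atTop (𝓝 (π ^ 2 / 16)) := by
    have hmain := (((tendsto_const_nhds (x := (1:ℝ))).sub tend0).add hT).const_mul (1/2 : ℝ)
    have hval : (1 / 2 : ℝ) * (1 - 0 + (π ^ 2 / 8 - 1)) = π ^ 2 / 16 := by ring
    rw [hval] at hmain
    exact hmain.congr fun n => (key n).symm
  have hs : HasSum (fun k : ℕ =>
      h 1 (k + 1) / ((2 * ((k : ℝ) + 1) - 1) * (2 * ((k : ℝ) + 1) + 1))) (π ^ 2 / 16) :=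
    (hasSum_iff_tendsto_nat_of_nonneg hnonneg _).mpr htend
  refine ⟨?_, hs.tsum_eq⟩
  rw [hs.tsum_eq]; ring
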